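/- In the GSW-type scheme, let sk ∈ ℤⁿ, Dec(c) = [1, sk]·c mod q. Let Enc'(k) = k·[I_{n+1}, ν I_{n+1}, …, ν^{d−1} I_{n+1}] + [B; A] mod q where [1, sk]·[B; A] = E with ‖E‖∞ ≤ n'·k₀σ and n' = d(n+1). Then for every k ∈ ℤ_q and c ∈ ℤ_q^{n+1}, Dec(Mult(Enc'(k), c)) = k·Dec(c) + Δ mod q for some Δ ∈ ℤ with |Δ| ≤ d(n+1)·k₀σ·ν, where Mult(c', c) = c'·col{c_i}_{i=0}^{d−1} mod q with c_i the base-ν digits of c. -/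

import Mathlib

lemma aux_div_div (a b c : ℤ) (ha : 0 ≤ a) (hb : 0 ≤ b) (hc : 0 ≤ c) :
    a / (b * c) = a / b / c := by
  lift a to ℕ using ha; lift b to ℕ using hb; lift c to ℕ using hc
  rw [← Nat.cast_mul, ← Int.natCast_ediv, ← Int.natCast_ediv, ← Int.natCast_ediv,
    Nat.div_div_eq_div_mul]

lemma aux_modeq_sum {α} (s : Finset α) (f g : α → ℤ) (m : ℤ)
    (h : ∀ a ∈ s, f a ≡ g a [ZMOD m]) :
    (∑ a ∈ s, f a) ≡ ∑ a ∈ s, g a [ZMOD m] := by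
  induction s using Finset.cons_induction with
  | empty => simp [Int.ModEq.refl]
  | cons a s ha ih =>
    simp only [Finset.sum_cons]
    exact (h a (by simp)).add (ih fun b hb => h b (by simp [hb]))

theorem gsw_mult_homomorphic_property
    (n q₀ ν₀ d : ℕ) (hd : 0 < d)
    (hlt : ((2 : ℤ) ^ ν₀) ^ (d - 1) < (2 : ℤ) ^ q₀)
    (hle : ((2 : ℤ) ^ q₀) ≤ ((2 : ℤ) ^ ν₀) ^ d)
    (k₀σ : ℝ) (sk : Fin n → ℤ)
    (BA : Matrix (Fin (n+1)) (Fin d × Fin (n+1)) ℤ)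
    (E : Fin d × Fin (n+1) → ℤ)
    (hE : ∀ j, (∑ i, (Fin.cons 1 sk : Fin (n+1) → ℤ) i * BA i j) = E j)
    (hEbound : (∑ j, (|E j| : ℝ)) ≤ ((d * (n+1) : ℕ) : ℝ) * k₀σ)
    (k : ℤ) (hk : 0 ≤ k ∧ k < (2 : ℤ) ^ q₀)
    (c : Fin (n+1) → ℤ) (hc : ∀ j, 0 ≤ c j ∧ c j < (2 : ℤ) ^ q₀) :
    let q : ℤ := (2 : ℤ) ^ q₀
    let ν : ℤ := (2 : ℤ) ^ ν₀
    let key : Fin (n+1) → ℤ := Fin.cons 1 sk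
    let Dec : (Fin (n+1) → ℤ) → ℤ := fun c' => (∑ i, key i * c' i) % q
    -- gadget matrix [I, νI, ..., ν^{d-1} I]
    let gadget : Matrix (Fin (n+1)) (Fin d × Fin (n+1)) ℤ :=
      Matrix.of fun i p => if p.2 = i then ν ^ (p.1 : ℕ) else 0
    let enc'k : Matrix (Fin (n+1)) (Fin d × Fin (n+1)) ℤ :=
      Matrix.of fun i p => (k * gadget i p + BA i p) % q
    -- base-ν digits of c
    let digits : Fin d × Fin (n+1) → ℤ :=
      fun p => (c p.2).fdiv (ν ^ (p.1 : ℕ)) - ((c p.2).fdiv (ν ^ ((p.1 : ℕ) + 1))) * ν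
    let mult : Fin (n+1) → ℤ := fun i => (enc'k.mulVec digits) i % q
    ∃ Δ : ℤ, |(Δ : ℝ)| ≤ ((d * (n+1) : ℕ) : ℝ) * k₀σ * ((2 : ℝ) ^ ν₀) ∧
      Dec mult = (k * Dec c + Δ) % q := by
  intro q ν key Dec gadget enc'k digits mult
  have hν0 : (0:ℤ) < ν := by positivity
  have hq0 : (0:ℤ) < q := by positivity
  -- digits are the base-ν digits
  have hdig : ∀ p : Fin d × Fin (n+1),
      digits p = (c p.2 / ν ^ (p.1 : ℕ)) % ν := by
    intro p
    have hc0 := (hc p.2).1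
    show (c p.2).fdiv (ν ^ (p.1 : ℕ)) - ((c p.2).fdiv (ν ^ ((p.1 : ℕ) + 1))) * ν
        = (c p.2 / ν ^ (p.1 : ℕ)) % ν
    rw [Int.fdiv_eq_ediv_of_nonneg _ (by positivity), Int.fdiv_eq_ediv_of_nonneg _ (by positivity),
      Int.emod_def, pow_succ,
      aux_div_div (c p.2) (ν ^ (p.1 : ℕ)) ν hc0 (by positivity) (le_of_lt hν0)]
    ring
  have hdig0 : ∀ p : Fin d × Fin (n+1), 0 ≤ digits p := by
    intro p; rw [hdig]; exact Int.emod_nonneg _ (ne_of_gt hν0)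
  have hdig1 : ∀ p : Fin d × Fin (n+1), digits p < ν := by
    intro p; rw [hdig]; exact Int.emod_lt_of_pos _ hν0
  -- telescoping: gadget reconstructs c
  have htel : ∀ j : Fin (n+1), (∑ t : Fin d, ν ^ (t : ℕ) * digits (t, j)) = c j := by
    intro j
    have hc0 := (hc j).1
    have hstep : ∀ t : Fin d, ν ^ (t : ℕ) * digits (t, j) =
        (fun t : ℕ => ν ^ t * (c j / ν ^ t)) (t : ℕ)
          - (fun t : ℕ => ν ^ t * (c j / ν ^ t)) ((t : ℕ) + 1) := by
      intro t
      show ν ^ (t : ℕ) * ((c j).fdiv (ν ^ (t : ℕ)) - ((c j).fdiv (ν ^ ((t : ℕ) + 1))) * ν) = _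
      rw [Int.fdiv_eq_ediv_of_nonneg _ (by positivity), Int.fdiv_eq_ediv_of_nonneg _ (by positivity)]
      simp only []
      ring
    rw [Finset.sum_congr rfl (fun t _ => hstep t),
      Fin.sum_univ_eq_sum_range (fun t : ℕ =>
        (fun s : ℕ => ν ^ s * (c j / ν ^ s)) t - (fun s : ℕ => ν ^ s * (c j / ν ^ s)) (t + 1)),
      Finset.sum_range_sub' (fun t : ℕ => ν ^ t * (c j / ν ^ t)) d]
    have hzero : c j / ν ^ d = 0 :=
      Int.ediv_eq_zero_of_lt hc0 (lt_of_lt_of_le (hc j).2 hle)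
    simp [hzero]
  -- the noise term
  refine ⟨∑ p : Fin d × Fin (n+1), E p * digits p, ?_, ?_⟩
  · -- bound
    have h1 : |((∑ p : Fin d × Fin (n+1), E p * digits p : ℤ) : ℝ)|
        ≤ ∑ p : Fin d × Fin (n+1), (|E p| : ℝ) * (2 : ℝ) ^ ν₀ := by
      push_cast
      refine le_trans (Finset.abs_sum_le_sum_abs _ _) (Finset.sum_le_sum fun p _ => ?_)
      rw [abs_mul]
      refine mul_le_mul_of_nonneg_left ?_ (abs_nonneg _)
      have h2 : |((digits p : ℤ) : ℝ)| = ((digits p : ℤ) : ℝ) := by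
        rw [abs_of_nonneg]; exact_mod_cast hdig0 p
      rw [h2]
      have := hdig1 p
      have : ((digits p : ℤ) : ℝ) < ((ν : ℤ) : ℝ) := by exact_mod_cast this
      refine le_of_lt (lt_of_lt_of_le this ?_)
      show (((2:ℤ) ^ ν₀ : ℤ) : ℝ) ≤ (2:ℝ) ^ ν₀
      push_cast
      exact le_rfl
    rw [← Finset.sum_mul] at h1
    refine le_trans h1 (mul_le_mul_of_nonneg_right hEbound (by positivity))
  · -- correctness mod q
    show (∑ i, key i * mult i) % q = (k * Dec c + ∑ p : Fin d × Fin (n+1), E p * digits p) % q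
    have step1 : (∑ i, key i * mult i) ≡
        (∑ i, key i * (enc'k.mulVec digits) i) [ZMOD q] := by
      refine aux_modeq_sum _ _ _ _ fun i _ => ?_
      exact Int.ModEq.mul_left _ (Int.emod_emod_of_dvd _ dvd_rfl)
    have step2 : (∑ i, key i * (enc'k.mulVec digits) i) ≡
        (∑ i, key i * ∑ p : Fin d × Fin (n+1),
          (k * gadget i p + BA i p) * digits p) [ZMOD q] := by
      refine aux_modeq_sum _ _ _ _ fun i _ => Int.ModEq.mul_left _ ?_
      show (∑ p : Fin d × Fin (n+1), enc'k i p * digits p) ≡ _ [ZMOD q]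
      refine aux_modeq_sum _ _ _ _ fun p _ => Int.ModEq.mul_right _ ?_
      exact Int.emod_emod_of_dvd _ dvd_rfl
    -- exact algebraic identity
    have step3 : (∑ i, key i * ∑ p : Fin d × Fin (n+1),
        (k * gadget i p + BA i p) * digits p)
        = k * (∑ i, key i * c i) + ∑ p : Fin d × Fin (n+1), E p * digits p := by
      have swap : (∑ i, key i * ∑ p : Fin d × Fin (n+1),
          (k * gadget i p + BA i p) * digits p)
          = ∑ p : Fin d × Fin (n+1),
              (∑ i, key i * (k * gadget i p + BA i p)) * digits p := by
        simp_rw [Finset.mul_sum, Finset.sum_mul]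
        rw [Finset.sum_comm]
        refine Finset.sum_congr rfl fun p _ => Finset.sum_congr rfl fun i _ => by ring
      rw [swap]
      have inner : ∀ p : Fin d × Fin (n+1),
          (∑ i, key i * (k * gadget i p + BA i p))
            = k * (key p.2 * ν ^ (p.1 : ℕ)) + E p := by
        intro p
        rw [← hE p]
        rw [show (∑ i, key i * (k * gadget i p + BA i p))
            = (∑ i, key i * (k * gadget i p)) + ∑ i, key i * BA i p by
          rw [← Finset.sum_add_distrib]; exact Finset.sum_congr rfl fun i _ => by ring]
        congr 1
        have : (∑ i, key i * (k * gadget i p))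
            = ∑ i, (if p.2 = i then k * (key i * ν ^ (p.1 : ℕ)) else 0) := by
          refine Finset.sum_congr rfl fun i _ => ?_
          show key i * (k * (if p.2 = i then ν ^ (p.1 : ℕ) else 0)) = _
          split <;> ring
        rw [this, Finset.sum_ite_eq]
        simp
      rw [Finset.sum_congr rfl fun p _ => by rw [inner p]]
      have expand : (∑ p : Fin d × Fin (n+1),
          (k * (key p.2 * ν ^ (p.1 : ℕ)) + E p) * digits p)
          = k * (∑ p : Fin d × Fin (n+1), key p.2 * (ν ^ (p.1 : ℕ) * digits p))
            + ∑ p : Fin d × Fin (n+1), E p * digits p := by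
        rw [Finset.mul_sum, ← Finset.sum_add_distrib]
        exact Finset.sum_congr rfl fun p _ => by ring
      rw [expand]
      congr 1
      rw [Fintype.sum_prod_type]
      rw [show (∑ t : Fin d, ∑ j : Fin (n+1), key j * (ν ^ (t : ℕ) * digits (t, j)))
          = ∑ j : Fin (n+1), key j * ∑ t : Fin d, ν ^ (t : ℕ) * digits (t, j) by
        rw [Finset.sum_comm]; exact Finset.sum_congr rfl fun j _ => by
          rw [Finset.mul_sum]]
      rw [Finset.sum_congr rfl fun j _ => by rw [htel j]]
    have step4 : (k * (∑ i, key i * c i) + ∑ p : Fin d × Fin (n+1), E p * digits p) ≡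
        (k * Dec c + ∑ p : Fin d × Fin (n+1), E p * digits p) [ZMOD q] := by
      refine Int.ModEq.add_right _ (Int.ModEq.mul_left _ ?_)
      exact (Int.emod_emod_of_dvd _ dvd_rfl).symm
    exact ((step1.trans step2).trans (step3 ▸ step4.symm).symm)
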